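/- The distinguishing number of the dutch windmill graph D_n^k, for n ≥ 2 and k ≥ 3, equals the minimum integer r such that (r^(k-1) - r^(⌈(k-1)/2⌉))/2 ≥ n. -/

import Mathlib

open SimpleGraph

/-- The distinguishing index: least number of labels in an edge labeling
preserved only by the identity automorphism. -/
noncomputable def distinguishingIndex {V : Type*} (G : SimpleGraph V) : ℕ :=
  sInf {d : ℕ | ∃ f : Sym2 V → Fin d,
    ∀ φ : G ≃g G, (∀ e ∈ G.edgeSet, f (Sym2.map ⇑φ e) = f e) → ∀ v, φ v = v}

/-- The distinguishing number: least number of labels in a vertex labeling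
preserved only by the identity automorphism. -/
noncomputable def distinguishingNumber {V : Type*} (G : SimpleGraph V) : ℕ :=
  sInf {d : ℕ | ∃ f : V → Fin d,
    ∀ φ : G ≃g G, (∀ v, f (φ v) = f v) → ∀ v, φ v = v}

/-- The dutch windmill graph `D_n^k`: `n` copies of the cycle `C_k`
sharing one common central vertex (`none`). -/
def windmill (n k : ℕ) : SimpleGraph (Option (Fin n × Fin (k - 1))) :=
  SimpleGraph.fromRel (fun a b =>
    match a, b with
    | none, some (_, j) => j.val = 0 ∨ j.val = k - 2
    | some (i, j), some (i', j') => i = i' ∧ j'.val = j.val + 1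
    | _, _ => False)

namespace WM
variable {n k : ℕ}

def rev (k : ℕ) (j : Fin (k-1)) : Fin (k-1) := ⟨k-2-j.val, by have := j.isLt; omega⟩

lemma rev_rev (j : Fin (k-1)) : rev k (rev k j) = j := by
  have := j.isLt; simp only [rev]; ext; simp; omega

lemma adj_none_some (i : Fin n) (j : Fin (k-1)) :
    (windmill n k).Adj none (some (i,j)) ↔ (j.val = 0 ∨ j.val = k - 2) := by
  simp [windmill, SimpleGraph.fromRel_adj]

lemma adj_some_some (i i' : Fin n) (j j' : Fin (k-1)) :
    (windmill n k).Adj (some (i,j)) (some (i',j')) ↔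
      (i = i' ∧ (j'.val = j.val + 1 ∨ j.val = j'.val + 1)) := by
  simp only [windmill, SimpleGraph.fromRel_adj]
  constructor
  · rintro ⟨hne, h | h⟩
    · exact ⟨h.1, Or.inl h.2⟩
    · exact ⟨h.1.symm, Or.inr h.2⟩
  · rintro ⟨rfl, h⟩
    refine ⟨?_, ?_⟩
    · intro hc
      have : j = j' := by simpa using hc
      subst this; omega
    · rcases h with h | h
      · exact Or.inl ⟨rfl, h⟩
      · exact Or.inr ⟨rfl, h⟩

lemma not_adj_none_none : ¬ (windmill n k).Adj none none := by simp

lemma adj_some_iff (i : Fin n) (j : Fin (k-1)) (b) :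
    (windmill n k).Adj (some (i,j)) b ↔
      (b = none ∧ (j.val = 0 ∨ j.val = k - 2)) ∨
      (∃ j', b = some (i, j') ∧ (j'.val = j.val + 1 ∨ j.val = j'.val + 1)) := by
  cases b with
  | none =>
    rw [SimpleGraph.adj_comm, adj_none_some]
    simp
  | some p =>
    obtain ⟨i', j'⟩ := p
    rw [adj_some_some]
    constructor
    · rintro ⟨rfl, h⟩; exact Or.inr ⟨j', rfl, h⟩
    · rintro (⟨h, -⟩ | ⟨j'', h, hv⟩)
      · exact absurd h (by simp)
      · have h' : (i', j') = (i, j'') := Option.some_injective _ h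
        rw [Prod.mk.injEq] at h'
        obtain ⟨h1, h2⟩ := h'
        subst h1; subst h2; exact ⟨rfl, hv⟩

lemma three_neighbors {i : Fin n} {j : Fin (k-1)} {b1 b2 b3 : Option (Fin n × Fin (k-1))}
    (h1 : (windmill n k).Adj (some (i,j)) b1) (h2 : (windmill n k).Adj (some (i,j)) b2)
    (h3 : (windmill n k).Adj (some (i,j)) b3)
    (h12 : b1 ≠ b2) (h13 : b1 ≠ b3) (h23 : b2 ≠ b3) : False := by
  rw [adj_some_iff] at h1 h2 h3
  have hjlt := j.isLt
  -- helper to extract data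
  rcases h1 with ⟨rfl, hc1⟩ | ⟨a1, rfl, hv1⟩ <;>
    rcases h2 with ⟨rfl, hc2⟩ | ⟨a2, rfl, hv2⟩ <;>
      rcases h3 with ⟨rfl, hc3⟩ | ⟨a3, rfl, hv3⟩
  · exact h12 rfl
  · exact h12 rfl
  · exact h13 rfl
  · -- b1 = none, b2 b3 some
    have ha23 : a2.val ≠ a3.val := by
      intro h; exact h23 (by rw [Fin.ext_iff.mpr h])
    have := a2.isLt; have := a3.isLt
    omega
  · exact h23 rfl
  · have ha13 : a1.val ≠ a3.val := by
      intro h; exact h13 (by rw [Fin.ext_iff.mpr h])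
    have := a1.isLt; have := a3.isLt
    omega
  · have ha12 : a1.val ≠ a2.val := by
      intro h; exact h12 (by rw [Fin.ext_iff.mpr h])
    have := a1.isLt; have := a2.isLt
    omega
  · have ha12 : a1.val ≠ a2.val := by
      intro h; exact h12 (by rw [Fin.ext_iff.mpr h])
    have ha13 : a1.val ≠ a3.val := by
      intro h; exact h13 (by rw [Fin.ext_iff.mpr h])
    have ha23 : a2.val ≠ a3.val := by
      intro h; exact h23 (by rw [Fin.ext_iff.mpr h])
    omega

lemma center_fixed (hn : 2 ≤ n) (hk : 3 ≤ k) (φ : windmill n k ≃g windmill n k) :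
    φ none = none := by
  by_contra hne
  obtain ⟨⟨i, j⟩, hij⟩ : ∃ p, φ none = some p := by
    cases h : φ none with
    | none => exact absurd h hne
    | some p => exact ⟨p, rfl⟩
  have h0 : (0:ℕ) < k - 1 := by omega
  have h1 : (1:ℕ) < n := hn
  set v1 : Option (Fin n × Fin (k-1)) := some (⟨0, by omega⟩, ⟨0, h0⟩) with hv1
  set v2 : Option (Fin n × Fin (k-1)) := some (⟨1, h1⟩, ⟨0, h0⟩) with hv2
  set v3 : Option (Fin n × Fin (k-1)) := some (⟨0, by omega⟩, ⟨k-2, by omega⟩) with hv3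
  have a1 : (windmill n k).Adj none v1 := (adj_none_some _ _).mpr (Or.inl rfl)
  have a2 : (windmill n k).Adj none v2 := (adj_none_some _ _).mpr (Or.inl rfl)
  have a3 : (windmill n k).Adj none v3 := (adj_none_some _ _).mpr (Or.inr rfl)
  have b1 : (windmill n k).Adj (some (i,j)) (φ v1) := hij ▸ φ.map_adj_iff.mpr a1
  have b2 : (windmill n k).Adj (some (i,j)) (φ v2) := hij ▸ φ.map_adj_iff.mpr a2
  have b3 : (windmill n k).Adj (some (i,j)) (φ v3) := hij ▸ φ.map_adj_iff.mpr a3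
  have d12 : v1 ≠ v2 := by simp [hv1, hv2, Fin.ext_iff]
  have d13 : v1 ≠ v3 := by simp [hv1, hv3, Fin.ext_iff]; omega
  have d23 : v2 ≠ v3 := by simp [hv2, hv3, Fin.ext_iff]
  exact three_neighbors b1 b2 b3 (fun h => d12 (φ.injective h))
    (fun h => d13 (φ.injective h)) (fun h => d23 (φ.injective h))

lemma propagate (hk : 3 ≤ k) (φ : windmill n k ≃g windmill n k) (hφ0 : φ none = none)
    (i : Fin n) :
    ∃ (i' : Fin n) (e : Bool), ∀ j : Fin (k-1),
      φ (some (i, j)) = some (i', if e then rev k j else j) := by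
  have h0 : (0:ℕ) < k - 1 := by omega
  have hadj0 : (windmill n k).Adj none (some (i, ⟨0, h0⟩)) := (adj_none_some _ _).mpr (Or.inl rfl)
  have hadj0' : (windmill n k).Adj none (φ (some (i, ⟨0, h0⟩))) := by
    have := φ.map_adj_iff.mpr hadj0; rwa [hφ0] at this
  obtain ⟨⟨i', j0⟩, hij0⟩ : ∃ p, φ (some (i, ⟨0, h0⟩)) = some p := by
    cases h : φ (some (i, ⟨0, h0⟩)) with
    | none => exact absurd (φ.injective (h.trans hφ0.symm)) (by simp)
    | some p => exact ⟨p, rfl⟩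
  rw [hij0] at hadj0'
  have hj0 : j0.val = 0 ∨ j0.val = k - 2 := (adj_none_some _ _).mp hadj0'
  rcases hj0 with hj0 | hj0
  · -- orientation preserving
    refine ⟨i', false, ?_⟩
    have main : ∀ jv (h : jv < k - 1), φ (some (i, ⟨jv, h⟩)) = some (i', ⟨jv, h⟩) := by
      intro jv
      induction jv using Nat.strong_induction_on with
      | _ jv IH =>
        intro h
        rcases jv with _ | m
        · rw [hij0]
          simp only [Option.some.injEq, Prod.mk.injEq, Fin.ext_iff]
          exact ⟨trivial, hj0⟩
        · have hm : m < k - 1 := by omega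
          have IHm := IH m (by omega) hm
          have hadj : (windmill n k).Adj (some (i,⟨m,hm⟩)) (some (i,⟨m+1,h⟩)) :=
            (adj_some_some _ _ _ _).mpr ⟨rfl, Or.inl rfl⟩
          have hadj' := φ.map_adj_iff.mpr hadj
          rw [IHm, adj_some_iff] at hadj'
          rcases hadj' with ⟨hno, -⟩ | ⟨a, ha, hv⟩
          · exact absurd (φ.injective (hno.trans hφ0.symm)) (by simp)
          · rw [ha]
            simp only [Option.some.injEq, Prod.mk.injEq, Fin.ext_iff]
            refine ⟨trivial, ?_⟩
            have hv' : a.val = m + 1 ∨ m = a.val + 1 := hv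
            rcases hv' with hv' | hv'
            · omega
            · exfalso
              have hm1 : m - 1 < k - 1 := by omega
              have IHm1 := IH (m-1) (by omega) hm1
              have haf : a = (⟨m-1, hm1⟩ : Fin (k-1)) := by ext; simp; omega
              have heq : some (i, (⟨m+1, h⟩ : Fin (k-1))) = some (i, ⟨m-1, hm1⟩) :=
                φ.injective (by rw [ha, IHm1, haf])
              simp only [Option.some.injEq, Prod.mk.injEq, Fin.ext_iff] at heq
              omega
    intro j
    simpa using main j.val j.isLt
  · -- orientation reversing
    refine ⟨i', true, ?_⟩
    have main : ∀ jv (h : jv < k - 1),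
        φ (some (i, ⟨jv, h⟩)) = some (i', ⟨k - 2 - jv, by omega⟩) := by
      intro jv
      induction jv using Nat.strong_induction_on with
      | _ jv IH =>
        intro h
        rcases jv with _ | m
        · rw [hij0]
          simp only [Option.some.injEq, Prod.mk.injEq, Fin.ext_iff]
          exact ⟨trivial, by omega⟩
        · have hm : m < k - 1 := by omega
          have IHm := IH m (by omega) hm
          have hadj : (windmill n k).Adj (some (i,⟨m,hm⟩)) (some (i,⟨m+1,h⟩)) :=
            (adj_some_some _ _ _ _).mpr ⟨rfl, Or.inl rfl⟩
          have hadj' := φ.map_adj_iff.mpr hadj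
          rw [IHm, adj_some_iff] at hadj'
          rcases hadj' with ⟨hno, -⟩ | ⟨a, ha, hv⟩
          · exact absurd (φ.injective (hno.trans hφ0.symm)) (by simp)
          · rw [ha]
            simp only [Option.some.injEq, Prod.mk.injEq, Fin.ext_iff]
            refine ⟨trivial, ?_⟩
            have halt := a.isLt
            have hv' : a.val = (k - 2 - m) + 1 ∨ k - 2 - m = a.val + 1 := hv
            rcases hv' with hv' | hv'
            · exfalso
              rcases Nat.eq_zero_or_pos m with rfl | hmpos
              · omega
              · have hm1 : m - 1 < k - 1 := by omega
                have IHm1 := IH (m-1) (by omega) hm1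
                have haf : a = (⟨k - 2 - (m-1), by omega⟩ : Fin (k-1)) := by
                  ext; simp; omega
                have heq : some (i, (⟨m+1, h⟩ : Fin (k-1))) = some (i, ⟨m-1, hm1⟩) :=
                  φ.injective (by rw [ha, IHm1, haf])
                simp only [Option.some.injEq, Prod.mk.injEq, Fin.ext_iff] at heq
                omega
            · omega
    intro j
    have := main j.val j.isLt
    simp only [if_true]
    simpa [rev] using this

lemma adj_some_none (i : Fin n) (j : Fin (k-1)) :
    (windmill n k).Adj (some (i,j)) none ↔ (j.val = 0 ∨ j.val = k - 2) := by
  rw [SimpleGraph.adj_comm]; exact adj_none_some i j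

def omap (σ : Equiv.Perm (Fin n)) (ε : Fin n → Bool) :
    Option (Fin n × Fin (k-1)) → Option (Fin n × Fin (k-1)) :=
  Option.map fun p => (σ p.1, if ε p.1 then rev k p.2 else p.2)

lemma mapAdj (σ : Equiv.Perm (Fin n)) (ε : Fin n → Bool) (a b) :
    (windmill n k).Adj (omap σ ε a) (omap σ ε b) ↔ (windmill n k).Adj a b := by
  rcases a with _ | ⟨i, j⟩ <;> rcases b with _ | ⟨i', j'⟩ <;>
    simp only [omap, Option.map_some, Option.map_none]
  · rw [adj_none_some, adj_none_some]
    have := j'.isLt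
    cases h : ε i' <;> simp only [h, if_true, if_false, Bool.false_eq_true, rev] <;> omega
  · rw [adj_some_none, adj_some_none]
    have := j.isLt
    cases h : ε i <;> simp only [h, if_true, if_false, Bool.false_eq_true, rev] <;> omega
  · rw [adj_some_some, adj_some_some]
    by_cases heq : i = i'
    · subst heq
      simp only [Equiv.apply_eq_iff_eq, true_and]
      have := j.isLt; have := j'.isLt
      cases h : ε i <;> simp only [h, if_true, if_false, Bool.false_eq_true, rev] <;> omega
    · have h2 : ¬ (σ i = σ i') := fun hc => heq (σ.injective hc)
      simp [heq, h2]

def mkAut (σ : Equiv.Perm (Fin n)) (ε : Fin n → Bool) :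
    windmill n k ≃g windmill n k where
  toEquiv :=
  { toFun := omap σ ε
    invFun := omap σ.symm (fun i => ε (σ.symm i))
    left_inv := by
      rintro (_ | ⟨i, j⟩)
      · rfl
      · simp only [omap, Option.map_some, Equiv.symm_apply_apply]
        cases h : ε i <;> simp [h, rev_rev]
    right_inv := by
      rintro (_ | ⟨i, j⟩)
      · rfl
      · simp only [omap, Option.map_some, Equiv.apply_symm_apply]
        cases h : ε (σ.symm i) <;> simp [h, rev_rev] }
  map_rel_iff' := by
    intro a b
    exact mapAdj σ ε a b

lemma mkAut_none (σ : Equiv.Perm (Fin n)) (ε : Fin n → Bool) :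
    mkAut (k := k) σ ε none = none := rfl

lemma mkAut_some (σ : Equiv.Perm (Fin n)) (ε : Fin n → Bool) (i : Fin n) (j : Fin (k-1)) :
    mkAut σ ε (some (i,j)) = some (σ i, if ε i then rev k j else j) := rfl

/-! ### Counting words -/

abbrev Wd (k r : ℕ) := Fin (k-1) → Fin r

def Rev (k r : ℕ) (w : Wd k r) : Wd k r := fun j => w (rev k j)

lemma Rev_Rev (k r : ℕ) (w : Wd k r) : Rev k r (Rev k r w) = w :=
  funext fun j => by rw [Rev, Rev, rev_rev]

noncomputable def ord (k r : ℕ) (w : Wd k r) : ℕ := (Fintype.equivFin (Wd k r) w).val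

lemma ord_inj {k r : ℕ} {a b : Wd k r} (h : ord k r a = ord k r b) : a = b :=
  (Fintype.equivFin _).injective (Fin.ext h)

def palEquiv (k r : ℕ) (hk : 3 ≤ k) :
    {w : Wd k r // Rev k r w = w} ≃ (Fin (k/2) → Fin r) where
  toFun w a := w.val ⟨a.val, by have := a.isLt; omega⟩
  invFun v := ⟨fun j => if hj : j.val < k/2 then v ⟨j.val, hj⟩
      else v ⟨k - 2 - j.val, by have := j.isLt; omega⟩, by
    funext j
    have hj := j.isLt
    show (if hj : (rev k j).val < k/2 then _ else _) = _
    simp only [rev]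
    show (if hj : k - 2 - j.val < k/2 then _ else _) = _
    split_ifs with h1 h2 h2
    · exact congrArg v (Fin.ext (by simp; omega))
    · rfl
    · exact congrArg v (Fin.ext (by simp; omega))
    · exfalso; simp at h1 h2; omega⟩
  left_inv := by
    rintro ⟨wv, hw⟩
    apply Subtype.ext
    funext j
    have hj := j.isLt
    simp only
    split_ifs with h1
    · exact congrArg wv (Fin.ext rfl)
    · calc wv ⟨k - 2 - j.val, by omega⟩ = (Rev k r wv) j := rfl
        _ = wv j := congrFun hw j
  right_inv := by
    intro v
    funext a
    have ha := a.isLt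
    simp only
    rw [dif_pos (by omega : (a.val : ℕ) < k/2)]

lemma card_pal (k r : ℕ) (hk : 3 ≤ k) :
    Fintype.card {w : Wd k r // Rev k r w = w} = r ^ (k/2) := by
  rw [Fintype.card_congr (palEquiv k r hk)]
  simp

noncomputable def Lf (k r : ℕ) : Finset (Wd k r) :=
  Finset.univ.filter (fun w => ord k r w < ord k r (Rev k r w))

lemma two_mul_Lf (k r : ℕ) (hk : 3 ≤ k) :
    2 * (Lf k r).card = r ^ (k-1) - r ^ (k/2) := by
  classical
  have hpal : (Finset.univ.filter (fun w : Wd k r => Rev k r w = w)).card = r ^ (k/2) := by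
    rw [← card_pal k r hk]
    exact (Fintype.card_subtype _).symm
  have htot := Finset.card_filter_add_card_filter_not
    (s := (Finset.univ : Finset (Wd k r))) (p := fun w => Rev k r w = w)
  rw [Finset.card_univ] at htot
  have hW : Fintype.card (Wd k r) = r ^ (k-1) := by simp
  set G : Finset (Wd k r) :=
    Finset.univ.filter (fun w => ord k r (Rev k r w) < ord k r w) with hG
  have hunion : Finset.univ.filter (fun w : Wd k r => ¬ Rev k r w = w) = Lf k r ∪ G := by
    ext w
    simp only [Finset.mem_filter, Finset.mem_union, Finset.mem_univ, true_and, Lf, hG,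
      Finset.filter_congr_decidable]
    constructor
    · intro hne
      have : ord k r w ≠ ord k r (Rev k r w) := fun h => hne (ord_inj h.symm)
      omega
    · rintro (h | h) hEq <;> rw [hEq] at h <;> omega
  have hdisj : Disjoint (Lf k r) G := by
    rw [Finset.disjoint_left]
    intro w hw hw'
    simp only [Lf, Finset.mem_filter, Finset.filter_congr_decidable] at hw
    simp only [hG, Finset.mem_filter, Finset.filter_congr_decidable] at hw'
    omega
  have hbij : G.card = (Lf k r).card := by
    apply Finset.card_bij' (fun w _ => Rev k r w) (fun w _ => Rev k r w)
    · intro a ha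
      simp only [hG, Finset.mem_filter, Finset.mem_univ, true_and,
        Finset.filter_congr_decidable] at ha
      simp only [Lf, Finset.mem_filter, Finset.mem_univ, true_and,
        Finset.filter_congr_decidable, Rev_Rev]
      exact ha
    · intro a ha
      simp only [Lf, Finset.mem_filter, Finset.mem_univ, true_and,
        Finset.filter_congr_decidable] at ha
      simp only [hG, Finset.mem_filter, Finset.mem_univ, true_and,
        Finset.filter_congr_decidable, Rev_Rev]
      exact ha
    · intro a _; exact Rev_Rev k r a
    · intro a _; exact Rev_Rev k r a
  have hcu : (Lf k r ∪ G).card = (Lf k r).card + G.card :=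
    Finset.card_union_of_disjoint hdisj
  rw [hpal, hW, hunion, hcu, hbij] at htot
  omega

/-! ### Existence of a distinguishing labeling -/

lemma exists_labeling (n k r : ℕ) (hn : 2 ≤ n) (hk : 3 ≤ k) (h : n ≤ (Lf k r).card) :
    ∃ f : Option (Fin n × Fin (k-1)) → Fin r,
      ∀ φ : windmill n k ≃g windmill n k, (∀ v, f (φ v) = f v) → ∀ v, φ v = v := by
  have hcard : Fintype.card (Fin n) ≤ Fintype.card {w // w ∈ Lf k r} := by
    rw [Fintype.card_fin, Fintype.card_coe]; exact h
  obtain ⟨g⟩ := Function.Embedding.nonempty_of_card_le hcard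
  have h0n : (0:ℕ) < n := by omega
  have h0k : (0:ℕ) < k - 1 := by omega
  refine ⟨fun v => match v with
    | none => (g ⟨0, h0n⟩).val ⟨0, h0k⟩
    | some (i,j) => (g i).val j, ?_⟩
  intro φ hpres
  have hc := center_fixed hn hk φ
  have hmem : ∀ i : Fin n, ord k r ((g i).val) < ord k r (Rev k r ((g i).val)) := by
    intro i
    have := (g i).prop
    simp only [Lf, Finset.mem_filter, Finset.mem_univ, true_and] at this
    exact this
  intro v
  match v with
  | none => exact hc
  | some (i, j) =>
    obtain ⟨i', e, hprop⟩ := propagate hk φ hc i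
    have hw : ∀ j0 : Fin (k-1), (g i').val (if e then rev k j0 else j0) = (g i).val j0 := by
      intro j0
      have := hpres (some (i,j0))
      rw [hprop j0] at this
      exact this
    cases e with
    | false =>
      have hfun : (g i').val = (g i).val := funext (fun j0 => by simpa using hw j0)
      have hii : i' = i := g.injective (Subtype.ext hfun)
      rw [hprop j, hii]
      simp
    | true =>
      exfalso
      have hB : (g i').val = Rev k r ((g i).val) := by
        funext j0
        have := hw (rev k j0)
        rw [rev_rev] at this
        simpa [Rev] using this
      have h2 := hmem i'
      rw [hB, Rev_Rev] at h2
      exact absurd (hmem i) (by omega)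

/-! ### Any distinguishing labeling needs enough words -/

lemma labeling_bound (n k r : ℕ) (hn : 2 ≤ n) (hk : 3 ≤ k)
    (f : Option (Fin n × Fin (k-1)) → Fin r)
    (hf : ∀ φ : windmill n k ≃g windmill n k, (∀ v, f (φ v) = f v) → ∀ v, φ v = v) :
    n ≤ (Lf k r).card := by
  have h0k : (0:ℕ) < k - 1 := by omega
  set w : Fin n → Wd k r := fun i j => f (some (i, j)) with hwdef
  have hnp : ∀ i, Rev k r (w i) ≠ w i := by
    intro i hpal
    set φ := mkAut (k := k) (1 : Equiv.Perm (Fin n)) (fun i' => decide (i' = i)) with hφ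
    have hpresv : ∀ v, f (φ v) = f v := by
      rintro (_ | ⟨i0, j⟩)
      · rw [hφ, mkAut_none]
      · rw [hφ, mkAut_some]
        by_cases hi : i0 = i
        · subst hi
          simp only [decide_eq_true_eq, if_pos rfl, Equiv.Perm.one_apply, decide_true]
          show w i0 (rev k j) = w i0 j
          exact congrFun hpal j
        · simp only [hi, decide_false, Equiv.Perm.one_apply, Bool.false_eq_true, if_false]
    have hid := hf φ hpresv (some (i, ⟨0, h0k⟩))
    rw [hφ, mkAut_some] at hid
    simp [rev, Fin.ext_iff] at hid
    omega
  set c : Fin n → Wd k r :=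
    fun i => if ord k r (w i) < ord k r (Rev k r (w i)) then w i else Rev k r (w i) with hcdef
  have hcmem : ∀ i, c i ∈ Lf k r := by
    intro i
    simp only [Lf, Finset.mem_filter, Finset.mem_univ, true_and, hcdef]
    split_ifs with h1
    · exact h1
    · have hne : ord k r (w i) ≠ ord k r (Rev k r (w i)) :=
        fun h => hnp i (ord_inj h.symm)
      rw [Rev_Rev]
      omega
  have hcinj : ∀ i1 i2, i1 ≠ i2 → c i1 ≠ c i2 := by
    intro i1 i2 hne hceq
    have hcase : w i2 = w i1 ∨ w i2 = Rev k r (w i1) := by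
      rw [hcdef] at hceq
      simp only at hceq
      split_ifs at hceq with h1 h2 h2
      · exact Or.inl hceq.symm
      · right
        rw [hceq, Rev_Rev]
      · exact Or.inr hceq.symm
      · left
        have := congrArg (Rev k r) hceq
        rwa [Rev_Rev, Rev_Rev, eq_comm] at this
    have hswap : i1 ≠ i2 := hne
    rcases hcase with hcase | hcase
    · set φ := mkAut (k := k) (Equiv.swap i1 i2) (fun _ => false) with hφ
      have hpresv : ∀ v, f (φ v) = f v := by
        rintro (_ | ⟨i0, j⟩)
        · rw [hφ, mkAut_none]
        · rw [hφ, mkAut_some]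
          simp only [Bool.false_eq_true, if_false]
          show w (Equiv.swap i1 i2 i0) j = w i0 j
          by_cases h1 : i0 = i1
          · subst h1; rw [Equiv.swap_apply_left]; exact congrFun hcase j
          by_cases h2 : i0 = i2
          · subst h2; rw [Equiv.swap_apply_right]; exact (congrFun hcase j).symm
          · rw [Equiv.swap_apply_of_ne_of_ne h1 h2]
      have hid := hf φ hpresv (some (i1, ⟨0, h0k⟩))
      rw [hφ, mkAut_some] at hid
      simp only [Bool.false_eq_true, if_false, Equiv.swap_apply_left, Option.some.injEq,
        Prod.mk.injEq] at hid
      exact hne hid.1.symm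
    · set φ := mkAut (k := k) (Equiv.swap i1 i2) (fun i0 => decide (i0 = i1 ∨ i0 = i2)) with hφ
      have hRw : Rev k r (w i2) = w i1 := by rw [hcase, Rev_Rev]
      have hpresv : ∀ v, f (φ v) = f v := by
        rintro (_ | ⟨i0, j⟩)
        · rw [hφ, mkAut_none]
        · rw [hφ, mkAut_some]
          by_cases h1 : i0 = i1
          · subst h1
            simp only [eq_self_iff_true, true_or, decide_true, if_true,
              Equiv.swap_apply_left]
            show w i2 (rev k j) = w i0 j
            exact congrFun hRw j
          · by_cases h2 : i0 = i2
            · subst h2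
              simp only [eq_self_iff_true, or_true, decide_true, if_true,
                Equiv.swap_apply_right]
              show w i1 (rev k j) = w i0 j
              exact (congrFun hcase j).symm
            · have hb : decide (i0 = i1 ∨ i0 = i2) = false := by simp [h1, h2]
              simp only [hb, Bool.false_eq_true, if_false,
                Equiv.swap_apply_of_ne_of_ne h1 h2]
      have hid := hf φ hpresv (some (i1, ⟨0, h0k⟩))
      rw [hφ, mkAut_some] at hid
      simp only [Equiv.swap_apply_left, Option.some.injEq, Prod.mk.injEq] at hid
      exact hne hid.1.symm
  have hle := Finset.card_le_card_of_injOn (s := (Finset.univ : Finset (Fin n)))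
    (t := Lf k r) c (fun i _ => hcmem i)
    (fun a _ b _ hab => by by_contra hab'; exact hcinj a b hab' hab)
  rwa [Finset.card_univ, Fintype.card_fin] at hle

end WM

theorem distinguishingNumber_windmill (n k : ℕ) (hn : 2 ≤ n) (hk : 3 ≤ k) :
    distinguishingNumber (windmill n k) =
      sInf {r : ℕ | n ≤ (r ^ (k - 1) - r ^ (k / 2)) / 2} := by
  unfold distinguishingNumber
  congr 1
  ext r
  simp only [Set.mem_setOf_eq]
  have hL := WM.two_mul_Lf k r hk
  have hLf : (r ^ (k - 1) - r ^ (k / 2)) / 2 = (WM.Lf k r).card := by omega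
  rw [hLf]
  constructor
  · rintro ⟨f, hf⟩
    exact WM.labeling_bound n k r hn hk f hf
  · intro h
    exact WM.exists_labeling n k r hn hk h
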